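/- Let g : M^{d×d} → [0,+∞) be continuous and nonnegative on the closed ball cl(B(I)) = {ξ : ‖ξ − I‖ ≤ 1}, and let h : [0,1) → [0,+∞) be convex with h(t) ≥ C(1/(1−t^α) − 1) for all t ∈ [0,1), for some constants C > 0 and α > 0. Define f(ξ) = g(ξ) + h(‖ξ−I‖) for ξ ∈ B(I) and f(ξ) = +∞ otherwise. Then for every sequence (ξ_n) ⊂ B(I) with det ξ_n → 0, one has f(ξ_n) → +∞. -/

import Mathlib

open Filter
open scoped Matrix.Norms.L2Operator ENNReal Topology

/-- Along any sequence in `B(I)` whose determinants tend to `0`,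
the density `f` tends to `+∞`. -/
theorem stmt_13 {d : ℕ} (g : Matrix (Fin d) (Fin d) ℝ → ℝ)
    (hgc : ContinuousOn g (Metric.closedBall (1 : Matrix (Fin d) (Fin d) ℝ) 1))
    (hg0 : ∀ ξ ∈ Metric.closedBall (1 : Matrix (Fin d) (Fin d) ℝ) 1, 0 ≤ g ξ)
    (h : ℝ → ℝ) (hhconv : ConvexOn ℝ (Set.Ico (0 : ℝ) 1) h)
    (hh0 : ∀ t ∈ Set.Ico (0 : ℝ) 1, 0 ≤ h t)
    (C α : ℝ) (hC : 0 < C) (hα : 0 < α)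
    (hlow : ∀ t ∈ Set.Ico (0 : ℝ) 1, C * (1 / (1 - t ^ α) - 1) ≤ h t)
    (f : Matrix (Fin d) (Fin d) ℝ → ℝ≥0∞)
    (hf : ∀ ξ, f ξ = if ‖ξ - 1‖ < 1 then ENNReal.ofReal (g ξ + h ‖ξ - 1‖) else ⊤) :
    ∀ ξ : ℕ → Matrix (Fin d) (Fin d) ℝ, (∀ n, ‖ξ n - 1‖ < 1) →
      Tendsto (fun n => (ξ n).det) atTop (𝓝 0) →
      Tendsto (fun n => f (ξ n)) atTop (𝓝 ⊤) := by
  intro ξ hξ hdet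
  set t : ℕ → ℝ := fun n => ‖ξ n - 1‖ with ht
  have htnonneg : ∀ n, 0 ≤ t n := fun n => norm_nonneg _
  have htlt : ∀ n, t n < 1 := hξ
  -- Step 1: ‖ξ n - 1‖ → 1
  have h1 : Tendsto t atTop (𝓝 1) := by
    rw [Metric.tendsto_nhds]
    intro ε hε
    rcases lt_or_ge (1 - ε) 0 with hcase | hcase
    · filter_upwards with n
      rw [Real.dist_eq, abs_of_nonpos (by linarith [htlt n])]
      linarith [htnonneg n]
    · -- det is bounded away from 0 on the compact ball of radius 1 - ε
      set K := Metric.closedBall (1 : Matrix (Fin d) (Fin d) ℝ) (1 - ε) with hK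
      have hKc : IsCompact K := isCompact_closedBall _ _
      have hKne : K.Nonempty := ⟨1, Metric.mem_closedBall_self (by linarith)⟩
      obtain ⟨x0, hx0K, hx0min⟩ := hKc.exists_isMinOn hKne
        ((continuous_abs.comp (continuous_id.matrix_det)).continuousOn)
      have hdetne : ∀ x ∈ K, x.det ≠ 0 := by
        intro x hxK
        have hxn : ‖1 - x‖ < 1 := by
          rw [← neg_sub, norm_neg]
          calc ‖x - 1‖ ≤ 1 - ε := by simpa [hK, Metric.mem_closedBall, dist_eq_norm] using hxK
            _ < 1 := by linarith
        have hu : IsUnit x := by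
          have := (Units.oneSub (1 - x) hxn).isUnit
          simpa using this
        exact ((Matrix.isUnit_iff_isUnit_det x).mp hu).ne_zero
      have hc : 0 < |x0.det| := abs_pos.mpr (hdetne x0 hx0K)
      have hev : ∀ᶠ n in atTop, |(ξ n).det| < |x0.det| := by
        have := hdet.abs
        rw [abs_zero] at this
        exact (this.eventually (gt_mem_nhds hc))
      filter_upwards [hev] with n hn
      have hnotK : ξ n ∉ K := by
        intro hmem
        exact absurd (hx0min hmem) (not_le.mpr hn)
      have : 1 - ε < t n := by
        by_contra hle
        exact hnotK (by simpa [hK, Metric.mem_closedBall, dist_eq_norm] using not_lt.mp hle)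
      rw [Real.dist_eq, abs_of_nonpos (by linarith [htlt n])]
      linarith
  -- Step 2: h (t n) → ∞ via the lower bound
  have hpow : Tendsto (fun n => t n ^ α) atTop (𝓝 1) := by
    have hc : ContinuousAt (fun x : ℝ => x ^ α) 1 :=
      Real.continuousAt_rpow_const 1 α (Or.inl one_ne_zero)
    simpa [Function.comp_def] using hc.tendsto.comp h1
  have hsub : Tendsto (fun n => 1 - t n ^ α) atTop (𝓝[>] 0) := by
    apply tendsto_nhdsWithin_of_tendsto_nhds_of_eventually_within
    · simpa using ((tendsto_const_nhds : Tendsto (fun _ : ℕ => (1:ℝ)) atTop (𝓝 1)).sub hpow)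
    · filter_upwards with n
      have : t n ^ α < 1 := Real.rpow_lt_one (htnonneg n) (htlt n) hα
      simpa [Set.mem_Ioi, sub_pos] using this
  have hinv : Tendsto (fun n => (1 - t n ^ α)⁻¹) atTop atTop :=
    tendsto_inv_nhdsGT_zero.comp hsub
  have hC' : Tendsto (fun n => C * (1 / (1 - t n ^ α) - 1)) atTop atTop := by
    have h2 : Tendsto (fun n => 1 / (1 - t n ^ α) - 1) atTop atTop := by
      simpa [one_div, sub_eq_add_neg] using hinv.atTop_add (tendsto_const_nhds : Tendsto (fun _ : ℕ => (-1 : ℝ)) atTop _)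
    exact h2.const_mul_atTop hC
  have hsum : Tendsto (fun n => g (ξ n) + h (t n)) atTop atTop := by
    apply tendsto_atTop_mono _ hC'
    intro n
    have hmem : t n ∈ Set.Ico (0 : ℝ) 1 := ⟨htnonneg n, htlt n⟩
    have hhl := hlow _ hmem
    have hg := hg0 (ξ n) (by simpa [Metric.mem_closedBall, dist_eq_norm] using (htlt n).le)
    linarith
  have hfin : Tendsto (fun n => ENNReal.ofReal (g (ξ n) + h (t n))) atTop (𝓝 ⊤) :=
    ENNReal.tendsto_ofReal_atTop.comp hsum
  refine hfin.congr fun n => ?_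
  rw [hf (ξ n), if_pos (htlt n)]
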